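/- The optimal value of minimize (aᵀx)² − n/4 + Σᵢ (min{xᵢ², 1/4} + min{(xᵢ−1)², 1/4}) subject to 𝟙ᵀx ≥ 1 is zero if and only if there exists x with xᵢ ∈ {0,1} for all i, Σᵢ xᵢ ≥ 1, and aᵀx = 0. -/

import Mathlib

set_option maxHeartbeats 1000000


/-- The optimal value of the subset-sum reduction problem
`minimize (aᵀx)² − n/4 + Σᵢ (min{xᵢ², 1/4} + min{(xᵢ−1)², 1/4})` subject to
`𝟙ᵀx ≥ 1` is zero iff there exists `x` with `xᵢ ∈ {0,1}`, `Σᵢ xᵢ ≥ 1`, `aᵀx = 0`. -/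
theorem subset_sum_reduction {n : ℕ} (a : Fin n → ℤ) :
    sInf {v : EReal | ∃ x : Fin n → ℝ, (1 : ℝ) ≤ ∑ i, x i ∧
        v = (((∑ i, (a i : ℝ) * x i) ^ 2 - n / 4 +
          ∑ i, (min ((x i) ^ 2) (1 / 4) + min ((x i - 1) ^ 2) (1 / 4)) : ℝ) : EReal)}
      = (0 : EReal) ↔
    ∃ x : Fin n → ℝ, (∀ i, x i = 0 ∨ x i = 1) ∧ (1 : ℝ) ≤ ∑ i, x i ∧
      ∑ i, (a i : ℝ) * x i = 0 := by
  have key : ∀ z : ℝ, (1:ℝ)/4 ≤ min (z^2) (1/4) + min ((z-1)^2) (1/4) := by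
    intro z
    rcases le_total z (1/2) with h | h
    · have h2 : min ((z-1)^2) ((1:ℝ)/4) = 1/4 := min_eq_right (by nlinarith)
      have h3 : (0:ℝ) ≤ min (z^2) (1/4) := le_min (sq_nonneg z) (by norm_num)
      rw [h2]; linarith
    · have h2 : min (z^2) ((1:ℝ)/4) = 1/4 := min_eq_right (by nlinarith)
      have h3 : (0:ℝ) ≤ min ((z-1)^2) (1/4) := le_min (sq_nonneg _) (by norm_num)
      rw [h2]; linarith
  constructor
  · intro hinf
    set A : ℝ := ∑ i, |(a i : ℝ)| with hAdef
    have hA : 0 ≤ A := Finset.sum_nonneg fun i _ => abs_nonneg _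
    have hn : (0:ℝ) ≤ (n:ℝ) := Nat.cast_nonneg n
    set δ : ℝ := 1 / (2 * ((n:ℝ) + A + 1)) with hδdef
    have hδpos : 0 < δ := by positivity
    have hδeq : δ * (2 * ((n:ℝ) + A + 1)) = 1 := by
      rw [hδdef]; field_simp
    have hδle : δ ≤ 1/2 := by nlinarith
    have hδ2 : δ^2 ≤ 1/4 := by nlinarith
    have h1 : sInf {v : EReal | ∃ x : Fin n → ℝ, (1 : ℝ) ≤ ∑ i, x i ∧
        v = (((∑ i, (a i : ℝ) * x i) ^ 2 - n / 4 +
          ∑ i, (min ((x i) ^ 2) (1 / 4) + min ((x i - 1) ^ 2) (1 / 4)) : ℝ) : EReal)}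
        < ((δ^2 : ℝ) : EReal) := by
      rw [hinf]
      exact_mod_cast (by positivity : (0:ℝ) < δ^2)
    rw [sInf_lt_iff] at h1
    obtain ⟨v, hvS, hvlt⟩ := h1
    obtain ⟨x, hx1, rfl⟩ := hvS
    have hflt : (∑ i, (a i : ℝ) * x i) ^ 2 - n / 4 +
        ∑ i, (min ((x i) ^ 2) (1 / 4) + min ((x i - 1) ^ 2) (1 / 4)) < δ^2 := by
      exact_mod_cast hvlt
    -- per-coordinate slack sum
    have hsum : ∑ i, (min ((x i) ^ 2) ((1:ℝ) / 4) + min ((x i - 1) ^ 2) (1 / 4) - 1/4)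
        = (∑ i, (min ((x i) ^ 2) ((1:ℝ)/4) + min ((x i - 1) ^ 2) (1/4))) - n/4 := by
      rw [Finset.sum_sub_distrib, Finset.sum_const, Finset.card_univ, Fintype.card_fin]
      ring
    have hs2 : (∑ i, (a i : ℝ) * x i) ^ 2 < δ^2 := by
      have h0 : (0:ℝ) ≤ ∑ i, (min ((x i) ^ 2) ((1:ℝ)/4) + min ((x i - 1) ^ 2) (1/4)) - n/4 := by
        rw [← hsum]
        exact Finset.sum_nonneg fun i _ => by linarith [key (x i)]
      linarith
    have habs : |∑ i, (a i : ℝ) * x i| < δ := by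
      nlinarith [sq_abs (∑ i, (a i : ℝ) * x i), abs_nonneg (∑ i, (a i : ℝ) * x i)]
    have hterm : ∀ i, min ((x i) ^ 2) ((1:ℝ)/4) + min ((x i - 1) ^ 2) (1/4) - 1/4 < δ^2 := by
      intro i
      have hle := Finset.single_le_sum
        (f := fun j => min ((x j) ^ 2) ((1:ℝ)/4) + min ((x j - 1) ^ 2) (1/4) - 1/4)
        (fun j _ => by linarith [key (x j)]) (Finset.mem_univ i)
      rw [hsum] at hle
      nlinarith [sq_nonneg (∑ i, (a i : ℝ) * x i)]
    -- the rounded vector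
    set k : Fin n → ℤ := fun i => if x i < 1/2 then 0 else 1 with hkdef
    set y : Fin n → ℝ := fun i => ((k i : ℤ) : ℝ) with hydef
    have hy01 : ∀ i, y i = 0 ∨ y i = 1 := by
      intro i; simp only [hydef, hkdef]; split_ifs <;> simp
    have hclose : ∀ i, |x i - y i| < δ := by
      intro i
      have hi := hterm i
      simp only [hydef, hkdef]
      split_ifs with hxi
      · have h2 : min ((x i - 1)^2) ((1:ℝ)/4) = 1/4 := min_eq_right (by nlinarith)
        rw [h2] at hi
        have hm : min ((x i)^2) ((1:ℝ)/4) < δ^2 := by linarith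
        have hx2 : (x i)^2 < δ^2 := by
          by_contra hcon
          push_neg at hcon
          have : δ^2 ≤ min ((x i)^2) ((1:ℝ)/4) := le_min hcon hδ2
          linarith
        push_cast
        nlinarith [sq_abs (x i - 0), abs_nonneg (x i - 0)]
      · have h2 : min ((x i)^2) ((1:ℝ)/4) = 1/4 := min_eq_right (by nlinarith)
        rw [h2] at hi
        have hm : min ((x i - 1)^2) ((1:ℝ)/4) < δ^2 := by linarith
        have hx2 : (x i - 1)^2 < δ^2 := by
          by_contra hcon
          push_neg at hcon
          have : δ^2 ≤ min ((x i - 1)^2) ((1:ℝ)/4) := le_min hcon hδ2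
          linarith
        push_cast
        nlinarith [sq_abs (x i - 1), abs_nonneg (x i - 1)]
    have hcloseLe : ∀ i, |x i - y i| ≤ δ := fun i => (hclose i).le
    -- sum of y is ≥ 1
    have hnδ : (n:ℝ) * δ ≤ 1/2 := by nlinarith
    have hAδ : (A + 1) * δ ≤ 1/2 := by nlinarith
    have hsumdiff : ∑ i, (x i - y i) ≤ (n:ℝ) * δ := by
      calc ∑ i, (x i - y i) ≤ ∑ i, |x i - y i| :=
            Finset.sum_le_sum fun i _ => le_abs_self _
        _ ≤ ∑ _i : Fin n, δ := Finset.sum_le_sum fun i _ => hcloseLe i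
        _ = (n:ℝ) * δ := by
            rw [Finset.sum_const, Finset.card_univ, Fintype.card_fin, nsmul_eq_mul]
    have hsumy : (1:ℝ)/2 ≤ ∑ i, y i := by
      have : ∑ i, (x i - y i) = (∑ i, x i) - ∑ i, y i := Finset.sum_sub_distrib _ _
      linarith [this ▸ hsumdiff]
    have hsumyk : ∑ i, y i = ((∑ i, k i : ℤ) : ℝ) := by
      rw [hydef]; push_cast; ring
    have hky : (1:ℤ) ≤ ∑ i, k i := by
      have h0 : (0:ℤ) < ∑ i, k i := by
        have : (0:ℝ) < ((∑ i, k i : ℤ) : ℝ) := by rw [← hsumyk]; linarith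
        exact_mod_cast this
      omega
    -- a·y = 0
    have hdiff : |∑ i, (a i : ℝ) * y i - ∑ i, (a i : ℝ) * x i| ≤ A * δ := by
      rw [← Finset.sum_sub_distrib]
      calc |∑ i, ((a i : ℝ) * y i - (a i : ℝ) * x i)|
          ≤ ∑ i, |(a i : ℝ) * y i - (a i : ℝ) * x i| := Finset.abs_sum_le_sum_abs _ _
        _ ≤ ∑ i, |(a i : ℝ)| * δ := by
            apply Finset.sum_le_sum
            intro i _
            rw [← mul_sub, abs_mul]
            have := hcloseLe i
            have h2 : |y i - x i| ≤ δ := by rwa [abs_sub_comm]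
            exact mul_le_mul_of_nonneg_left h2 (abs_nonneg _)
        _ = A * δ := by rw [← Finset.sum_mul]
    have hay : |∑ i, (a i : ℝ) * y i| < 1 := by
      have := abs_sub_abs_le_abs_sub (∑ i, (a i : ℝ) * y i) (∑ i, (a i : ℝ) * x i)
      nlinarith
    have hayk : ∑ i, (a i : ℝ) * y i = ((∑ i, a i * k i : ℤ) : ℝ) := by
      rw [hydef]; push_cast; ring
    have hk0 : (∑ i, a i * k i : ℤ) = 0 := by
      have h2 : |((∑ i, a i * k i : ℤ) : ℝ)| < 1 := by rw [← hayk]; exact hay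
      rw [← Int.cast_abs] at h2
      have h3 : |(∑ i, a i * k i : ℤ)| < 1 := by exact_mod_cast h2
      have h4 := abs_lt.mp h3
      omega
    refine ⟨y, hy01, ?_, ?_⟩
    · rw [hsumyk]; exact_mod_cast hky
    · rw [hayk, hk0]; norm_num
  · rintro ⟨x, hx01, hx1, hax⟩
    apply le_antisymm
    · apply sInf_le
      refine ⟨x, hx1, ?_⟩
      have hterm : ∀ i, min ((x i) ^ 2) ((1:ℝ)/4) + min ((x i - 1) ^ 2) (1/4) = 1/4 := by
        intro i
        rcases hx01 i with h | h <;> rw [h] <;> norm_num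
      have hsum : ∑ i, (min ((x i) ^ 2) ((1:ℝ)/4) + min ((x i - 1) ^ 2) (1/4)) = n/4 := by
        rw [Finset.sum_congr rfl fun i _ => hterm i, Finset.sum_const, Finset.card_univ,
          Fintype.card_fin, nsmul_eq_mul]
        ring
      rw [hax, hsum]
      norm_num
    · apply le_sInf
      rintro v ⟨x', hx'1, rfl⟩
      have hsum : (n:ℝ)/4 ≤ ∑ i, (min ((x' i) ^ 2) ((1:ℝ)/4) + min ((x' i - 1) ^ 2) (1/4)) := by
        calc (n:ℝ)/4 = ∑ _i : Fin n, (1:ℝ)/4 := by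
              rw [Finset.sum_const, Finset.card_univ, Fintype.card_fin, nsmul_eq_mul]; ring
          _ ≤ _ := Finset.sum_le_sum fun i _ => key (x' i)
      have h0 : (0:ℝ) ≤ (∑ i, (a i : ℝ) * x' i) ^ 2 - n / 4 +
          ∑ i, (min ((x' i) ^ 2) (1 / 4) + min ((x' i - 1) ^ 2) (1 / 4)) := by
        nlinarith [sq_nonneg (∑ i, (a i : ℝ) * x' i)]
      exact_mod_cast h0
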